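/- Let a > b ≥ 1 be coprime positive integers and set c = a/b, so c > 1 is rational. Let γ_c : ℝ → ℝ² be the hypocycloid parametrization γ_c(φ) = ((c-1)·cos φ + cos((c-1)φ), (c-1)·sin φ − sin((c-1)φ)). Then the total arclength of the c-hypocycloid is ϖ_c = ∫₀^{2πb} ‖γ_c'(ψ)‖ dψ = 8b(c−1). -/

import Mathlib

open Real

/-- For `c = a/b > 1` rational in lowest terms, the total arclength of the
`c`-hypocycloid is `∫₀^{2πb} ‖γ_c'‖ = 8b(c-1)`. -/
theorem hypocycloid_total_arclength (a b : ℕ) (hb : 1 ≤ b) (hab : b < a)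
    (hcop : Nat.Coprime a b) (c : ℝ) (hc : c = (a : ℝ) / (b : ℝ))
    (γ : ℝ → EuclideanSpace ℝ (Fin 2))
    (hγ : ∀ φ : ℝ, γ φ =
      ![(c - 1) * Real.cos φ + Real.cos ((c - 1) * φ),
        (c - 1) * Real.sin φ - Real.sin ((c - 1) * φ)]) :
    (∫ ψ in (0 : ℝ)..(2 * π * b), ‖deriv γ ψ‖) = 8 * b * (c - 1) := by
  have hb0 : (0:ℝ) < b := by exact_mod_cast hb
  have hc1 : 1 < c := by
    rw [hc, lt_div_iff₀ hb0]
    exact_mod_cast by linarith [hab]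
  set k : ℝ := c - 1 with hk
  have hk0 : 0 < k := by simp [hk]; linarith
  -- derivative of γ
  have hder : ∀ ψ : ℝ, deriv γ ψ =
      (WithLp.toLp 2 ![-(k * Real.sin ψ) - k * Real.sin (k * ψ),
         k * Real.cos ψ - k * Real.cos (k * ψ)] : EuclideanSpace ℝ (Fin 2)) := by
    intro ψ
    have hlin : HasDerivAt (fun x : ℝ => k * x) k ψ := by
      simpa using (hasDerivAt_id ψ).const_mul k
    have h0 : HasDerivAt (fun x : ℝ => k * Real.cos x + Real.cos (k * x))
        (-(k * Real.sin ψ) - k * Real.sin (k * ψ)) ψ := by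
      have h1 := (Real.hasDerivAt_cos ψ).const_mul k
      have h2 := (Real.hasDerivAt_cos (k * ψ)).comp ψ hlin
      exact (h1.add h2).congr_deriv (by ring)
    have h1 : HasDerivAt (fun x : ℝ => k * Real.sin x - Real.sin (k * x))
        (k * Real.cos ψ - k * Real.cos (k * ψ)) ψ := by
      have h1 := (Real.hasDerivAt_sin ψ).const_mul k
      have h2 := (Real.hasDerivAt_sin (k * ψ)).comp ψ hlin
      exact (h1.sub h2).congr_deriv (by ring)
    have hγeq : γ = fun φ : ℝ =>
        (WithLp.toLp 2 ![(k) * Real.cos φ + Real.cos (k * φ),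
           k * Real.sin φ - Real.sin (k * φ)] : EuclideanSpace ℝ (Fin 2)) := by
      funext φ; exact congrArg (WithLp.toLp 2) (hγ φ)
    have hpi : HasDerivAt (fun φ : ℝ =>
        (![(k) * Real.cos φ + Real.cos (k * φ),
           k * Real.sin φ - Real.sin (k * φ)] : Fin 2 → ℝ))
        (![-(k * Real.sin ψ) - k * Real.sin (k * ψ),
           k * Real.cos ψ - k * Real.cos (k * ψ)] : Fin 2 → ℝ) ψ := by
      rw [hasDerivAt_pi]
      intro i
      fin_cases i
      · simpa using h0
      · simpa using h1
    have : HasDerivAt γ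
        (WithLp.toLp 2 ![-(k * Real.sin ψ) - k * Real.sin (k * ψ),
           k * Real.cos ψ - k * Real.cos (k * ψ)] : EuclideanSpace ℝ (Fin 2)) ψ := by
      rw [hγeq]
      exact ((PiLp.continuousLinearEquiv 2 ℝ (fun _ : Fin 2 => ℝ)).symm.toContinuousLinearMap.hasFDerivAt.comp_hasDerivAt ψ hpi)
    exact this.deriv
  -- norm of the derivative
  have hnorm : ∀ ψ : ℝ, ‖deriv γ ψ‖ = 2 * k * |Real.sin (c * ψ / 2)| := by
    intro ψ
    rw [hder ψ, EuclideanSpace.norm_eq]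
    have : ∑ i : Fin 2, ‖(![-(k * Real.sin ψ) - k * Real.sin (k * ψ),
         k * Real.cos ψ - k * Real.cos (k * ψ)] : Fin 2 → ℝ) i‖ ^ 2
        = (2 * k * |Real.sin (c * ψ / 2)|) ^ 2 := by
      simp only [Fin.sum_univ_two, Matrix.cons_val_zero, Matrix.cons_val_one, Matrix.head_cons,
        Real.norm_eq_abs, sq_abs]
      have hsq : Real.sin (c * ψ / 2) ^ 2 = 1 / 2 - Real.cos (c * ψ) / 2 := by
        rw [Real.sin_sq_eq_half_sub]
        ring_nf
      have hcos : Real.cos (c * ψ) = Real.cos ψ * Real.cos (k * ψ) - Real.sin ψ * Real.sin (k * ψ) := by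
        rw [show c * ψ = ψ + k * ψ by rw [hk]; ring, Real.cos_add]
      rw [mul_pow, sq_abs, hsq]
      rw [hcos]
      have hp1 := Real.sin_sq_add_cos_sq ψ
      have hp2 := Real.sin_sq_add_cos_sq (k * ψ)
      nlinarith [hp1, hp2]
    rw [this, Real.sqrt_sq (by positivity)]
  rw [intervalIntegral.integral_congr (fun ψ _ => hnorm ψ)]
  rw [intervalIntegral.integral_const_mul]
  have h2 : ∀ ψ : ℝ, Real.sin (c * ψ / 2) = Real.sin ((c / 2) * ψ) := by
    intro ψ; ring_nf
  simp_rw [h2]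
  have hc0 : c / 2 ≠ 0 := by positivity
  rw [intervalIntegral.integral_comp_mul_left (fun x => |Real.sin x|) hc0]
  have hub : (c / 2) * (2 * π * b) = (a : ℝ) * π := by
    field_simp [hc]
    rw [hc, div_mul_cancel₀ _ hb0.ne']
  rw [mul_zero, hub]
  -- periodicity: ∫₀^{aπ} |sin| = a * 2
  have hper : Function.Periodic (fun x => |Real.sin x|) π := by
    intro x; simp [Real.sin_add_pi]
  have hint : ∀ t₁ t₂ : ℝ, IntervalIntegrable (fun x => |Real.sin x|) MeasureTheory.volume t₁ t₂ :=
    fun t₁ t₂ => (Real.continuous_sin.abs).intervalIntegrable t₁ t₂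
  have key : (∫ x in (0:ℝ)..((a:ℝ) * π), |Real.sin x|) = (a : ℝ) * 2 := by
    have := hper.intervalIntegral_add_zsmul_eq (a : ℤ) 0 hint
    simp only [zero_add, zsmul_eq_mul, Int.cast_natCast] at this
    rw [this]
    have hsinpi : (∫ x in (0:ℝ)..π, |Real.sin x|) = 2 := by
      rw [intervalIntegral.integral_congr (g := Real.sin) (fun x hx => by
        rw [Set.uIcc_of_le Real.pi_pos.le] at hx
        exact abs_of_nonneg (Real.sin_nonneg_of_nonneg_of_le_pi hx.1 hx.2))]
      simp [integral_sin]; norm_num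
    rw [hsinpi]
  rw [key]
  have hab' : (a : ℝ) = c * b := by
    field_simp [hc]
    rw [hc, div_mul_cancel₀ _ hb0.ne']
  rw [smul_eq_mul, hab']
  field_simp
  ring
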